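/- (Binet formula for even indices) Let α and β be the roots of x² − ab·x − 2ab = 0 with a, b > 0, i.e., α = (ab + √(a²b² + 8ab))/2 and β = (ab − √(a²b² + 8ab))/2. Then for every n ≥ 0, j_{2n} = (a/(ab)^n)·(α^{2n} − β^{2n})/(α − β). -/
import Mathlib

noncomputable def jj (a b : ℝ) : ℕ → ℝ
  | 0 => 0
  | 1 => 1
  | n + 2 => (if Even (n + 2) then a else b) * jj a b (n + 1) + 2 * jj a b n

lemma jj_rec (a b : ℝ) (n : ℕ) :
    jj a b (2*n+4) = (a*b+4) * jj a b (2*n+2) - 4 * jj a b (2*n) := by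
  show jj a b ((2*n+2)+2) = (a*b+4) * jj a b ((2*n)+2) - 4 * jj a b (2*n)
  simp only [jj]
  have h1 : Even (2*n+2+2) := by rw [Nat.even_iff]; omega
  have h2 : ¬ Even (2*n+1+2) := by rw [Nat.even_iff]; omega
  have h3 : Even (2*n+2) := by rw [Nat.even_iff]; omega
  simp only [show (2*n+2)+1 = (2*n+1)+2 from rfl, jj, if_pos h1, if_neg h2, if_pos h3,
    show (2*n+1)+1 = 2*n+2 from rfl]
  ring

theorem stmt7 (a b : ℝ) (ha : 0 < a) (hb : 0 < b) (n : ℕ)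
    (α β : ℝ)
    (hα : α = (a * b + Real.sqrt (a ^ 2 * b ^ 2 + 8 * a * b)) / 2)
    (hβ : β = (a * b - Real.sqrt (a ^ 2 * b ^ 2 + 8 * a * b)) / 2) :
    jj a b (2 * n) = a / (a * b) ^ n * ((α ^ (2 * n) - β ^ (2 * n)) / (α - β)) := by
  set s := Real.sqrt (a ^ 2 * b ^ 2 + 8 * a * b) with hsdef
  have hD : (0:ℝ) < a ^ 2 * b ^ 2 + 8 * a * b := by positivity
  have hs2 : s ^ 2 = a ^ 2 * b ^ 2 + 8 * a * b := Real.sq_sqrt hD.le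
  have hs0 : 0 < s := Real.sqrt_pos.mpr hD
  have hsub : α - β = s := by rw [hα, hβ]; ring
  have hne : α - β ≠ 0 := by rw [hsub]; exact hs0.ne'
  have hsum : α + β = a * b := by rw [hα, hβ]; ring
  have hprod : α * β = -2 * (a * b) := by
    rw [hα, hβ]
    have : s * s = a ^ 2 * b ^ 2 + 8 * a * b := by nlinarith [hs2]
    nlinarith [this]
  have hab : (0:ℝ) < a * b := mul_pos ha hb
  have habn : ∀ m : ℕ, ((a*b):ℝ) ^ m ≠ 0 := fun m => pow_ne_zero m hab.ne'
  -- key quartic relation for α and β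
  have hq : ∀ x y : ℝ, x ^ 4 = (x^2 + y^2) * x^2 - (x*y)^2 + (x^2 - y^2) * 0 := by
    intro x y; ring
  have hS : α ^ 2 + β ^ 2 = a^2*b^2 + 4*(a*b) := by nlinarith [hsum, hprod]
  have hP : (α * β) ^ 2 = 4 * (a*b)^2 := by nlinarith [hprod]
  have hα4 : α ^ 4 = (a^2*b^2 + 4*(a*b)) * α^2 - 4*(a*b)^2 := by
    have : α ^ 4 = (α^2 + β^2) * α^2 - (α*β)^2 := by ring
    rw [this, hS, hP]
  have hβ4 : β ^ 4 = (a^2*b^2 + 4*(a*b)) * β^2 - 4*(a*b)^2 := by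
    have : β ^ 4 = (α^2 + β^2) * β^2 - (α*β)^2 := by ring
    rw [this, hS, hP]
  induction n using Nat.twoStepInduction with
  | zero => simp [jj]
  | one =>
      have hj2 : jj a b 2 = a := by simp [jj]
      rw [show 2*1 = 2 from rfl, hj2]
      have : α ^ 2 - β ^ 2 = (α + β) * (α - β) := by ring
      rw [pow_one, this, hsum]
      field_simp
  | more m ih1 ih2 =>
      have hrec := jj_rec a b m
      have e1 : 2 * (m + 2) = 2*m + 4 := by ring
      have e2 : 2 * (m + 1) = 2*m + 2 := by ring
      rw [e1, hrec, ← e2, ih2, ← show 2*m = 2*m from rfl, ih1]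
      have hα' : α ^ (2*(m+2)) = ((a^2*b^2 + 4*(a*b)) * α^2 - 4*(a*b)^2) * α ^ (2*m) := by
        rw [show 2*(m+2) = 4 + 2*m from by ring, pow_add, hα4]
      have hβ' : β ^ (2*(m+2)) = ((a^2*b^2 + 4*(a*b)) * β^2 - 4*(a*b)^2) * β ^ (2*m) := by
        rw [show 2*(m+2) = 4 + 2*m from by ring, pow_add, hβ4]
      rw [show 2*m+4 = 2*(m+2) from by ring, hα', hβ']
      have hm1 : α ^ (2*(m+1)) = α^2 * α^(2*m) := by rw [show 2*(m+1) = 2 + 2*m from by ring, pow_add]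
      have hm2 : β ^ (2*(m+1)) = β^2 * β^(2*m) := by rw [show 2*(m+1) = 2 + 2*m from by ring, pow_add]
      rw [hm1, hm2]
      have hp1 : ((a*b):ℝ)^(m+2) = (a*b)^m * (a*b)^2 := by ring
      have hp2 : ((a*b):ℝ)^(m+1) = (a*b)^m * (a*b) := by ring
      rw [hp1, hp2]
      field_simp
      ring
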